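/- Let n ≥ 1, let U ⊆ ℝⁿ be an open set, let f : U → ℝ be a C² function with ‖∇f(x)‖ = 1 for all x ∈ U, and let γ : (a, b) → U be a differentiable curve satisfying γ′(t) = ∇f(γ(t)) for all t ∈ (a, b). Then γ is twice differentiable with γ″(t) = 0 for all t ∈ (a, b); consequently, for any t₀ ∈ (a, b), γ(t) = γ(t₀) + (t − t₀)·∇f(γ(t₀)) for all t ∈ (a, b), and f(γ(t)) = f(γ(t₀)) + (t − t₀). -/

import Mathlib

open InnerProductSpace

local notation "⟪" x ", " y "⟫" => @inner ℝ _ _ x y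

/-- Constancy on an open interval from vanishing derivative. -/
lemma aux_const_of_hasDerivAt_zero {E : Type*} [NormedAddCommGroup E] [NormedSpace ℝ E]
    {φ : ℝ → E} {a b : ℝ} (h : ∀ s ∈ Set.Ioo a b, HasDerivAt φ 0 s)
    {t t₀ : ℝ} (ht : t ∈ Set.Ioo a b) (ht₀ : t₀ ∈ Set.Ioo a b) : φ t = φ t₀ := by
  refine (convex_Ioo a b).is_const_of_fderivWithin_eq_zero
    (fun s hs => ((h s hs).differentiableAt).differentiableWithinAt) ?_ ht ht₀
  intro s hs
  rw [fderivWithin_of_isOpen isOpen_Ioo hs, (h s hs).hasFDerivAt.fderiv]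
  ext
  simp

/-- The inverse of `toDual` as a real continuous linear map. -/
noncomputable def auxL (n : ℕ) :
    StrongDual ℝ (EuclideanSpace ℝ (Fin n)) →L[ℝ] EuclideanSpace ℝ (Fin n) :=
  ContinuousLinearMap.mk
    { toFun := fun μ => (InnerProductSpace.toDual ℝ _).symm μ
      map_add' := fun μ ν => map_add _ μ ν
      map_smul' := fun r μ => by
        show (InnerProductSpace.toDual ℝ _).symm (r • μ) = _
        rw [LinearIsometryEquiv.map_smulₛₗ]; simp }
    ((InnerProductSpace.toDual ℝ _).symm.continuous)

/-- Key: the derivative of the gradient of a unit eikonal function annihilates the gradient. -/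
lemma aux_eikonal_key {n : ℕ} {U : Set (EuclideanSpace ℝ (Fin n))} (hUopen : IsOpen U)
    {f : EuclideanSpace ℝ (Fin n) → ℝ} (hf : ContDiffOn ℝ 2 f U)
    (heik : ∀ x ∈ U, ‖gradient f x‖ = 1) {x : EuclideanSpace ℝ (Fin n)} (hx : x ∈ U) :
    ∃ G : EuclideanSpace ℝ (Fin n) →L[ℝ] EuclideanSpace ℝ (Fin n),
      HasFDerivAt (gradient f) G x ∧ G (gradient f x) = 0 := by
  have hU𝓝 : U ∈ nhds x := hUopen.mem_nhds hx
  have hCA : ∀ y ∈ U, ContDiffAt ℝ 2 f y := fun y hy => (hf y hy).contDiffAt (hUopen.mem_nhds hy)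
  have hf'diff : DifferentiableAt ℝ (fderiv ℝ f) x :=
    ((hCA x hx).fderiv_right (m := 1) (by norm_num)).differentiableAt one_ne_zero
  set f'' := fderiv ℝ (fderiv ℝ f) x with hf''def
  have Hf'' : HasFDerivAt (fderiv ℝ f) f'' x := hf'diff.hasFDerivAt
  have hev : ∀ᶠ y in nhds x, HasFDerivAt f (fderiv ℝ f y) y := by
    filter_upwards [hU𝓝] with y hy
    exact ((hCA y hy).differentiableAt two_ne_zero).hasFDerivAt
  have hsymm : ∀ v w, f'' v w = f'' w v :=
    second_derivative_symmetric_of_eventually hev Hf''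
  set L := auxL n with hLdef
  refine ⟨L.comp f'', ?_, ?_⟩
  · have := L.hasFDerivAt.comp x Hf''
    exact this
  · have hInner : ∀ v w : EuclideanSpace ℝ (Fin n), ⟪(L.comp f'') v, w⟫ = f'' v w := by
      intro v w
      simp [hLdef, auxL, InnerProductSpace.toDual_symm_apply]
    have hzero : ∀ v : EuclideanSpace ℝ (Fin n), ⟪(L.comp f'') v, gradient f x⟫ = 0 := by
      have hGrad : HasFDerivAt (gradient f) (L.comp f'') x := L.hasFDerivAt.comp x Hf''
      have heq : (fun _ => (1:ℝ)) =ᶠ[nhds x]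
          (fun y => ⟪gradient f y, gradient f y⟫) := by
        filter_upwards [hU𝓝] with y hy
        rw [real_inner_self_eq_norm_mul_norm, heik y hy]; norm_num
      have hD : HasFDerivAt (fun _ => (1:ℝ))
          ((fderivInnerCLM ℝ (gradient f x, gradient f x)).comp
            ((L.comp f'').prod (L.comp f''))) x :=
        (HasFDerivAt.inner ℝ hGrad hGrad).congr_of_eventuallyEq heq
      have hD0 := (hasFDerivAt_const (1:ℝ) x).unique hD
      intro v
      have h := congrFun (congrArg (fun (T : EuclideanSpace ℝ (Fin n) →L[ℝ] ℝ) => (T : EuclideanSpace ℝ (Fin n) → ℝ)) hD0) v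
      simp only [ContinuousLinearMap.comp_apply, ContinuousLinearMap.prod_apply,
        fderivInnerCLM_apply, ContinuousLinearMap.zero_apply] at h
      rw [real_inner_comm (gradient f x)] at h
      have hz : ⟪gradient f x, L (f'' v)⟫ = 0 := by linarith
      rw [ContinuousLinearMap.comp_apply, real_inner_comm]
      exact hz
    have : ⟪(L.comp f'') (gradient f x), (L.comp f'') (gradient f x)⟫ = 0 := by
      rw [hInner, hsymm, ← hInner]
      exact hzero _
    exact inner_self_eq_zero.mp this

/-- The integral curves of the gradient of a unit eikonal function (`‖∇f‖ ≡ 1` on the open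
set `U`) are straight line segments: if `γ'(t) = ∇f(γ(t))` on `(a, b)`, then `γ'' ≡ 0`,
so `γ(t) = γ(t₀) + (t − t₀)·∇f(γ(t₀))` and `f(γ(t)) = f(γ(t₀)) + (t − t₀)`. -/
theorem gradient_flow_of_eikonal_is_line {n : ℕ} (hn : 1 ≤ n)
    (U : Set (EuclideanSpace ℝ (Fin n))) (hUopen : IsOpen U)
    (f : EuclideanSpace ℝ (Fin n) → ℝ) (hf : ContDiffOn ℝ 2 f U)
    (heik : ∀ x ∈ U, ‖gradient f x‖ = 1)
    (a b : ℝ) (γ : ℝ → EuclideanSpace ℝ (Fin n))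
    (hγU : ∀ t ∈ Set.Ioo a b, γ t ∈ U)
    (hγ : ∀ t ∈ Set.Ioo a b, HasDerivAt γ (gradient f (γ t)) t) :
    (∀ t ∈ Set.Ioo a b, HasDerivAt (deriv γ) 0 t) ∧
    (∀ t₀ ∈ Set.Ioo a b, ∀ t ∈ Set.Ioo a b,
      γ t = γ t₀ + (t - t₀) • gradient f (γ t₀) ∧
      f (γ t) = f (γ t₀) + (t - t₀)) := by
  have hcomp : ∀ t ∈ Set.Ioo a b, HasDerivAt (fun s => gradient f (γ s)) 0 t := by
    intro t ht
    obtain ⟨G, hG, hG0⟩ := aux_eikonal_key hUopen hf heik (hγU t ht)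
    have := hG.comp_hasDerivAt t (hγ t ht)
    rwa [hG0] at this
  constructor
  · intro t ht
    have hmem : Set.Ioo a b ∈ nhds t := isOpen_Ioo.mem_nhds ht
    have heq : deriv γ =ᶠ[nhds t] fun s => gradient f (γ s) := by
      filter_upwards [hmem] with s hs
      exact (hγ s hs).deriv
    exact (hcomp t ht).congr_of_eventuallyEq heq
  · intro t₀ ht₀ t ht
    have hconst : gradient f (γ t) = gradient f (γ t₀) :=
      aux_const_of_hasDerivAt_zero hcomp ht ht₀
    constructor
    · have hφ : ∀ s ∈ Set.Ioo a b,
          HasDerivAt (fun s => γ s - s • gradient f (γ t₀)) 0 s := by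
        intro s hs
        have h1 := (hγ s hs).sub ((hasDerivAt_id s).smul_const (gradient f (γ t₀)))
        have h2 : gradient f (γ s) = gradient f (γ t₀) :=
          aux_const_of_hasDerivAt_zero hcomp hs ht₀
        simp only [h2, one_smul, sub_self] at h1; exact h1
      have := aux_const_of_hasDerivAt_zero hφ ht ht₀
      have h3 : γ t - t • gradient f (γ t₀) = γ t₀ - t₀ • gradient f (γ t₀) := this
      rw [sub_smul]
      calc γ t = (γ t - t • gradient f (γ t₀)) + t • gradient f (γ t₀) := by abel
        _ = (γ t₀ - t₀ • gradient f (γ t₀)) + t • gradient f (γ t₀) := by rw [h3]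
        _ = γ t₀ + (t • gradient f (γ t₀) - t₀ • gradient f (γ t₀)) := by abel
    · have hψ : ∀ s ∈ Set.Ioo a b, HasDerivAt (fun s => f (γ s) - s) 0 s := by
        intro s hs
        have hdf : DifferentiableAt ℝ f (γ s) :=
          ((hf _ (hγU s hs)).contDiffAt (hUopen.mem_nhds (hγU s hs))).differentiableAt two_ne_zero
        have hgr : HasFDerivAt f (InnerProductSpace.toDual ℝ _ (gradient f (γ s))) (γ s) :=
          hdf.hasGradientAt.hasFDerivAt
        have h1 : HasDerivAt (fun u => f (γ u))
            (InnerProductSpace.toDual ℝ _ (gradient f (γ s)) (gradient f (γ s))) s :=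
          hgr.comp_hasDerivAt s (hγ s hs)
        have h2 : (InnerProductSpace.toDual ℝ _ (gradient f (γ s))) (gradient f (γ s)) = 1 := by
          rw [InnerProductSpace.toDual_apply_apply, real_inner_self_eq_norm_mul_norm,
            heik _ (hγU s hs)]
          norm_num
        rw [h2] at h1
        have := h1.sub (hasDerivAt_id s)
        simp only [sub_self, id] at this; exact this
      have := aux_const_of_hasDerivAt_zero hψ ht ht₀
      have h3 : f (γ t) - t = f (γ t₀) - t₀ := this
      linarith
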